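/- arXiv:1808.05304 — 3 statements merged into one kernel-verified Lean document; each statement's English description precedes it below -/
import Mathlib

section
/- Let p, q, u be variable exponents on ℝ^n with p ≤ u, and let δ > 0. For any sequence (g_j)_{j∈ℕ_0} of non-negative measurable functions on ℝ^n define G_k(x) := ∑_{j=0}^∞ 2^{−|k−j|δ} g_j(x) for k ∈ ℕ_0. Then ‖(G_k)_k‖_{M^{u(·)}_{p(·)}(ℓ^{q(·)})} ≤ c(δ,q) ‖(g_j)_j‖_{M^{u(·)}_{p(·)}(ℓ^{q(·)})}, where c(δ,q) = max( ∑_{j∈ℤ} 2^{−|j|δ}, ( ∑_{j∈ℤ} 2^{−|j|δ q^-} )^{1/q^-} ). -/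
open MeasureTheory ENNReal Real
open scoped FourierTransform

noncomputable section

/-- Euclidean space `ℝ^n`. -/
abbrev Rn (n : ℕ) : Type := EuclideanSpace ℝ (Fin n)

variable {n : ℕ}

/-- The function `φ_t(s)` used in the semimodular of variable exponent Lebesgue spaces:
`φ_t(s) = s^t` for `t < ∞`, while `φ_∞(s) = 0` for `s ≤ 1` and `= ∞` for `s > 1`. -/
def phiVE (t : ℝ≥0∞) (s : ℝ≥0∞) : ℝ≥0∞ :=
  if t = ∞ then (if s ≤ 1 then 0 else ∞) else s ^ t.toReal

/-- The semimodular `ρ_p` of variable exponent Lebesgue spaces. -/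
def modularVE (p : Rn n → ℝ≥0∞) (g : Rn n → ℝ≥0∞) : ℝ≥0∞ :=
  ∫⁻ x, phiVE (p x) (g x)

/-- The variable exponent Lebesgue quasi-norm `‖·‖_{L^{p(·)}(ℝ^n)}`, applied to the
(pointwise) absolute value of a function, i.e. to `[0,∞]`-valued functions.
(For `p⁻ ≥ 1` this is the usual Luxemburg norm; for general `p` it agrees with the
definition via `‖f‖ = ‖|f|^t‖_{L^{p/t}}^{1/t}`.) -/
def vLpNorm (p : Rn n → ℝ≥0∞) (g : Rn n → ℝ≥0∞) : ℝ≥0∞ :=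
  sInf {lam : ℝ≥0∞ | modularVE p (fun x => g x / lam) ≤ 1}

/-- A variable exponent: a measurable function `p : ℝ^n → (0,∞]` with `p⁻ = ess inf p > 0`. -/
def IsVarExp (p : Rn n → ℝ≥0∞) : Prop :=
  Measurable p ∧ (∀ x, 0 < p x) ∧ 0 < essInf p (volume : Measure (Rn n))

/-- Local log-Hölder continuity of `g : ℝ^n → ℝ`. -/
def LocLogHolder (g : Rn n → ℝ) : Prop :=
  ∃ c > 0, ∀ x y : Rn n, |g x - g y| ≤ c / Real.log (Real.exp 1 + (dist x y)⁻¹)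

/-- Log-Hölder decay of `g` at infinity, with limit value `gInf` and constant `c`. -/
def LogDecay (g : Rn n → ℝ) (gInf c : ℝ) : Prop :=
  ∀ x : Rn n, |g x - gInf| ≤ c / Real.log (Real.exp 1 + ‖x‖)

/-- `p ∈ P^log(ℝ^n)`, with prescribed limit value `pinvInf = 1/p_∞` of `1/p` at infinity. -/
def IsPLogWith (p : Rn n → ℝ≥0∞) (pinvInf : ℝ) : Prop :=
  IsVarExp p ∧ LocLogHolder (fun x => (p x)⁻¹.toReal) ∧
    ∃ c > 0, LogDecay (fun x => (p x)⁻¹.toReal) pinvInf c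

/-- `p ∈ P^log(ℝ^n)`. -/
def IsPLog (p : Rn n → ℝ≥0∞) : Prop := ∃ pinvInf : ℝ, IsPLogWith p pinvInf

/-- The Morrey quasi-norm `‖·‖_{M^{u(·)}_{p(·)}(ℝ^n)}` of a `[0,∞]`-valued function:
`sup_{x, r>0} r^{n(1/u(x) - 1/p(x))} ‖f‖_{L^{p(·)}(B_r(x))}`. -/
def morreyNorm (p u : Rn n → ℝ≥0∞) (g : Rn n → ℝ≥0∞) : ℝ≥0∞ :=
  ⨆ (x : Rn n) (r : ℝ) (_ : 0 < r),
    ENNReal.ofReal (r ^ ((n : ℝ) * ((u x)⁻¹.toReal - (p x)⁻¹.toReal))) *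
      vLpNorm p ((Metric.ball x r).indicator g)

/-- The `ℓ^q` (quasi-)norm of a sequence in `[0,∞]`, with the usual modification for `q = ∞`. -/
def lqNorm (q : ℝ≥0∞) (a : ℕ → ℝ≥0∞) : ℝ≥0∞ :=
  if q = ∞ then ⨆ ν, a ν else (∑' ν, a ν ^ q.toReal) ^ (1 / q.toReal)

/-- The vector-valued Morrey quasi-norm `‖(f_ν)_ν‖_{M^{u(·)}_{p(·)}(ℓ^{q(·)})}`. -/
def morreySeqNorm (p u q : Rn n → ℝ≥0∞) (f : ℕ → Rn n → ℝ≥0∞) : ℝ≥0∞ :=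
  morreyNorm p u (fun x => lqNorm (q x) (fun ν => f ν x))

/-- The kernel `η_{ν,m}(x) = 2^{νn} (1 + 2^ν |x|)^{-m}`. -/
def etaK (ν : ℕ) (m : ℝ) (x : Rn n) : ℝ≥0∞ :=
  ENNReal.ofReal ((2 : ℝ) ^ (ν * n) * (1 + 2 ^ ν * ‖x‖) ^ (-m))

/-- Convolution of `[0,∞]`-valued functions. -/
def lconv (f g : Rn n → ℝ≥0∞) (x : Rn n) : ℝ≥0∞ := ∫⁻ y, f (x - y) * g y

/-- The constant `c_{p,u} = max(0, sup_x (1/p(x) - 1/u(x)) - 1/p_∞)`. -/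
def cpu (p u : Rn n → ℝ≥0∞) (pinvInf : ℝ) : ℝ :=
  max 0 ((⨆ x : Rn n, ((p x)⁻¹.toReal - (u x)⁻¹.toReal)) - pinvInf)



lemma rpow_sum_le_sum_rpow' {ι : Type*} (s : Finset ι) (a : ι → ℝ≥0∞) {t : ℝ}
    (ht : 0 < t) (ht1 : t ≤ 1) :
    (∑ i ∈ s, a i) ^ t ≤ ∑ i ∈ s, a i ^ t := by
  classical
  induction s using Finset.induction with
  | empty => simp [ENNReal.zero_rpow_of_pos ht]
  | insert _ _ h ih =>
      rw [Finset.sum_insert h, Finset.sum_insert h]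
      exact le_trans (ENNReal.rpow_add_le_add_rpow _ _ ht.le ht1) (by gcongr)

lemma rpow_tsum_le_tsum_rpow' (a : ℕ → ℝ≥0∞) {t : ℝ} (ht : 0 < t) (ht1 : t ≤ 1) :
    (∑' i, a i) ^ t ≤ ∑' i, a i ^ t := by
  have h1 : (∑' i, a i) ≤ (∑' i, a i ^ t) ^ (1 / t) := by
    rw [ENNReal.tsum_eq_iSup_sum]
    refine iSup_le fun s => ?_
    have h2 : (∑ i ∈ s, a i) = ((∑ i ∈ s, a i) ^ t) ^ (1 / t) := by
      rw [← ENNReal.rpow_mul, mul_one_div_cancel ht.ne', ENNReal.rpow_one]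
    rw [h2]
    exact ENNReal.rpow_le_rpow ((rpow_sum_le_sum_rpow' s a ht ht1).trans
      (ENNReal.sum_le_tsum s)) (by positivity)
  calc (∑' i, a i) ^ t ≤ ((∑' i, a i ^ t) ^ (1 / t)) ^ t := ENNReal.rpow_le_rpow h1 ht.le
  _ = ∑' i, a i ^ t := by rw [← ENNReal.rpow_mul, one_div_mul_cancel ht.ne', ENNReal.rpow_one]

lemma tsum_weight_holder' (w f : ℕ → ℝ≥0∞) {t : ℝ} (ht : 1 ≤ t) :
    ∑' i, w i * f i ≤ (∑' i, w i) ^ (1 - t⁻¹) * (∑' i, w i * f i ^ t) ^ t⁻¹ := by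
  have ht0 : (0:ℝ) < t := lt_of_lt_of_le one_pos ht
  have h1 : (0:ℝ) ≤ 1 - t⁻¹ := by
    have : t⁻¹ ≤ 1 := inv_le_one_of_one_le₀ ht
    linarith
  rw [ENNReal.tsum_eq_iSup_sum]
  refine iSup_le fun s => ?_
  refine (ENNReal.inner_le_weight_mul_Lp_of_nonneg s ht w f).trans ?_
  exact mul_le_mul' (ENNReal.rpow_le_rpow (ENNReal.sum_le_tsum s) h1)
    (ENNReal.rpow_le_rpow (ENNReal.sum_le_tsum s) (by positivity))

lemma summableS' {c : ℝ} (hc : 0 < c) : Summable (fun j : ℤ => (2:ℝ) ^ (-|(j:ℝ)| * c)) := by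
  have hnat : Summable (fun n : ℕ => (2:ℝ) ^ (-(n:ℝ) * c)) := by
    have e : (fun n : ℕ => (2:ℝ) ^ (-(n:ℝ) * c)) = fun n => ((2:ℝ) ^ (-c)) ^ n := by
      funext n
      rw [← Real.rpow_natCast ((2:ℝ) ^ (-c)) n, ← Real.rpow_mul (by norm_num)]
      ring_nf
    rw [e]
    exact summable_geometric_of_lt_one (Real.rpow_nonneg (by norm_num) _)
      (Real.rpow_lt_one_of_one_lt_of_neg (by norm_num) (neg_lt_zero.mpr hc))
  apply Summable.of_nat_of_neg
  · refine hnat.congr fun n => ?_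
    norm_num [Nat.abs_cast]
  · refine hnat.congr fun n => ?_
    push_cast
    rw [abs_neg, Nat.abs_cast]

lemma oneleS' {c : ℝ} (hc : 0 < c) : 1 ≤ ∑' j : ℤ, (2:ℝ) ^ (-|(j:ℝ)| * c) := by
  have h := Summable.le_tsum (summableS' hc) 0 (fun j _ => Real.rpow_nonneg (by norm_num) _)
  simpa using h

lemma tsum_weight_le' {c : ℝ} (hc : 0 < c) (k : ℕ) :
    ∑' j : ℕ, ENNReal.ofReal ((2:ℝ) ^ (-(|(k:ℤ) - (j:ℤ)| : ℝ) * c)) ≤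
      ENNReal.ofReal (∑' j : ℤ, (2:ℝ) ^ (-|(j:ℝ)| * c)) := by
  have hinj : Function.Injective (fun j : ℕ => (j : ℤ) - (k : ℤ)) := by
    intro a b hab
    simp only at hab
    omega
  calc ∑' j : ℕ, ENNReal.ofReal ((2:ℝ) ^ (-(|(k:ℤ) - (j:ℤ)| : ℝ) * c))
      = ∑' j : ℕ, (fun i : ℤ => ENNReal.ofReal ((2:ℝ) ^ (-|(i:ℝ)| * c))) ((j:ℤ) - k) := by
        refine tsum_congr fun j => ?_
        simp only
        congr 2
        rw [abs_sub_comm]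
        push_cast
        ring
  _ ≤ ∑' i : ℤ, ENNReal.ofReal ((2:ℝ) ^ (-|(i:ℝ)| * c)) :=
        ENNReal.tsum_comp_le_tsum_of_injective hinj _
  _ = ENNReal.ofReal (∑' j : ℤ, (2:ℝ) ^ (-|(j:ℝ)| * c)) :=
        (ENNReal.ofReal_tsum_of_nonneg (fun j => Real.rpow_nonneg (by norm_num) _)
          (summableS' hc)).symm

lemma tsum_weight_le'' {c : ℝ} (hc : 0 < c) (k : ℕ) :
    ∑' j : ℕ, ENNReal.ofReal ((2:ℝ) ^ (-(|(j:ℤ) - (k:ℤ)| : ℝ) * c)) ≤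
      ENNReal.ofReal (∑' j : ℤ, (2:ℝ) ^ (-|(j:ℝ)| * c)) := by
  calc ∑' j : ℕ, ENNReal.ofReal ((2:ℝ) ^ (-(|(j:ℤ) - (k:ℤ)| : ℝ) * c))
      = ∑' j : ℕ, ENNReal.ofReal ((2:ℝ) ^ (-(|(k:ℤ) - (j:ℤ)| : ℝ) * c)) :=
        tsum_congr fun j => by rw [abs_sub_comm]
  _ ≤ _ := tsum_weight_le' hc k



lemma lq_est (delta : ℝ) (hdelta : 0 < delta) (sE : ℝ≥0∞) (hs0 : 0 < sE)
    (t : ℝ≥0∞) (ht0 : 0 < t) (hst : sE ≤ t) (a : ℕ → ℝ≥0∞) :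
    lqNorm t (fun k => ∑' j : ℕ,
        ENNReal.ofReal ((2 : ℝ) ^ (-(|(k : ℤ) - (j : ℤ)| : ℝ) * delta)) * a j) ≤
      ENNReal.ofReal
          (max (∑' j : ℤ, (2 : ℝ) ^ (-|(j : ℝ)| * delta))
            ((∑' j : ℤ, (2 : ℝ) ^ (-|(j : ℝ)| * delta * sE.toReal)) ^ (1 / sE.toReal))) *
        lqNorm t a := by
  set w : ℕ → ℕ → ℝ≥0∞ :=
    fun k j => ENNReal.ofReal ((2 : ℝ) ^ (-(|(k : ℤ) - (j : ℤ)| : ℝ) * delta)) with hw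
  set S1 : ℝ := ∑' j : ℤ, (2 : ℝ) ^ (-|(j : ℝ)| * delta) with hS1
  set C : ℝ≥0∞ := ENNReal.ofReal
      (max S1 ((∑' j : ℤ, (2 : ℝ) ^ (-|(j : ℝ)| * delta * sE.toReal)) ^ (1 / sE.toReal)))
    with hC
  have h1S1 : 1 ≤ S1 := oneleS' hdelta
  have hS1C : ENNReal.ofReal S1 ≤ C := ENNReal.ofReal_le_ofReal (le_max_left _ _)
  have hW : ∀ k, ∑' j, w k j ≤ ENNReal.ofReal S1 := fun k => tsum_weight_le' hdelta k
  have hW' : ∀ j, ∑' k, w k j ≤ ENNReal.ofReal S1 := fun j => tsum_weight_le'' hdelta j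
  by_cases htop : t = ∞
  · subst htop
    simp only [lqNorm, if_pos rfl]
    refine iSup_le fun k => ?_
    calc ∑' j, w k j * a j ≤ ∑' j, w k j * (⨆ ν, a ν) :=
          ENNReal.tsum_le_tsum fun j => mul_le_mul_right (le_iSup a j) _
    _ = (∑' j, w k j) * (⨆ ν, a ν) := ENNReal.tsum_mul_right
    _ ≤ C * (⨆ ν, a ν) := mul_le_mul_left ((hW k).trans hS1C) _
  · set T := t.toReal with hT
    have hT0 : 0 < T := ENNReal.toReal_pos ht0.ne' htop
    have hlq : ∀ b : ℕ → ℝ≥0∞, lqNorm t b = (∑' k, b k ^ T) ^ (1 / T) := fun b => by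
      simp [lqNorm, htop, hT]
    rw [hlq, hlq]
    rcases le_or_gt 1 T with hT1 | hT1
    · -- Hölder case, T ≥ 1
      have hx0 : ENNReal.ofReal S1 ≠ 0 := by
        simp [ENNReal.ofReal_pos.mpr (lt_of_lt_of_le one_pos h1S1), ne_of_gt]
      have h1T : (0:ℝ) ≤ 1 - T⁻¹ := by
        have : T⁻¹ ≤ 1 := inv_le_one_of_one_le₀ hT1
        linarith
      have hkey : ∀ k, (∑' j, w k j * a j) ^ T ≤
          ENNReal.ofReal S1 ^ (T - 1) * ∑' j, w k j * a j ^ T := by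
        intro k
        calc (∑' j, w k j * a j) ^ T
            ≤ (ENNReal.ofReal S1 ^ (1 - T⁻¹) * (∑' j, w k j * a j ^ T) ^ T⁻¹) ^ T := by
              refine ENNReal.rpow_le_rpow ?_ hT0.le
              exact (tsum_weight_holder' (w k) a hT1).trans
                (mul_le_mul_left (ENNReal.rpow_le_rpow (hW k) h1T) _)
        _ = ENNReal.ofReal S1 ^ (T - 1) * ∑' j, w k j * a j ^ T := by
              rw [ENNReal.mul_rpow_of_nonneg _ _ hT0.le, ← ENNReal.rpow_mul,
                ← ENNReal.rpow_mul, inv_mul_cancel₀ hT0.ne', ENNReal.rpow_one]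
              congr 2
              field_simp
      have hsum : ∑' k, (∑' j, w k j * a j) ^ T ≤
          ENNReal.ofReal S1 ^ T * ∑' j, a j ^ T := by
        calc ∑' k, (∑' j, w k j * a j) ^ T
            ≤ ∑' k, ENNReal.ofReal S1 ^ (T - 1) * ∑' j, w k j * a j ^ T :=
              ENNReal.tsum_le_tsum hkey
        _ = ENNReal.ofReal S1 ^ (T - 1) * ∑' k, ∑' j, w k j * a j ^ T := ENNReal.tsum_mul_left
        _ = ENNReal.ofReal S1 ^ (T - 1) * ∑' j, (∑' k, w k j) * a j ^ T := by
              rw [ENNReal.tsum_comm]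
              exact congrArg _ (tsum_congr fun j => ENNReal.tsum_mul_right)
        _ ≤ ENNReal.ofReal S1 ^ (T - 1) * (ENNReal.ofReal S1 * ∑' j, a j ^ T) := by
              refine mul_le_mul_right ?_ _
              calc ∑' j, (∑' k, w k j) * a j ^ T
                  ≤ ∑' j, ENNReal.ofReal S1 * a j ^ T :=
                    ENNReal.tsum_le_tsum fun j => mul_le_mul_left (hW' j) _
              _ = ENNReal.ofReal S1 * ∑' j, a j ^ T := ENNReal.tsum_mul_left
        _ = ENNReal.ofReal S1 ^ T * ∑' j, a j ^ T := by
              rw [← mul_assoc]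
              congr 1
              have h2 := ENNReal.rpow_add (T - 1) 1 hx0 ENNReal.ofReal_ne_top
              rw [ENNReal.rpow_one] at h2
              rw [← h2, sub_add_cancel]
      calc (∑' k, (∑' j, w k j * a j) ^ T) ^ (1 / T)
          ≤ (ENNReal.ofReal S1 ^ T * ∑' j, a j ^ T) ^ (1 / T) :=
            ENNReal.rpow_le_rpow hsum (by positivity)
      _ = ENNReal.ofReal S1 * (∑' j, a j ^ T) ^ (1 / T) := by
            rw [ENNReal.mul_rpow_of_nonneg _ _ (by positivity), ← ENNReal.rpow_mul,
              mul_one_div_cancel hT0.ne', ENNReal.rpow_one]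
      _ ≤ C * (∑' j, a j ^ T) ^ (1 / T) := mul_le_mul_left hS1C _
    · -- case T < 1
      have hsEtop : sE ≠ ∞ := ne_top_of_le_ne_top htop hst
      set sR := sE.toReal with hsR
      have hsR0 : 0 < sR := ENNReal.toReal_pos hs0.ne' hsEtop
      have hsRT : sR ≤ T := ENNReal.toReal_mono htop hst
      have hdT : 0 < delta * T := mul_pos hdelta hT0
      have hdsR : 0 < delta * sR := mul_pos hdelta hsR0
      set S2 : ℝ := ∑' j : ℤ, (2 : ℝ) ^ (-|(j : ℝ)| * (delta * sR)) with hS2def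
      have h1S2 : 1 ≤ S2 := oneleS' hdsR
      have hS2eq : (∑' j : ℤ, (2 : ℝ) ^ (-|(j : ℝ)| * delta * sR)) = S2 :=
        tsum_congr fun j => by rw [mul_assoc]
      have hS2C : ENNReal.ofReal (S2 ^ (1 / sR)) ≤ C := by
        rw [hC, ← hS2eq]
        exact ENNReal.ofReal_le_ofReal (le_max_right _ _)
      have hkey : ∀ k, (∑' j, w k j * a j) ^ T ≤ ∑' j, w k j ^ T * a j ^ T := fun k =>
        (rpow_tsum_le_tsum_rpow' _ hT0 hT1.le).trans_eq
          (tsum_congr fun j => ENNReal.mul_rpow_of_nonneg _ _ hT0.le)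
      have hwT : ∀ k j : ℕ, w k j ^ T =
          ENNReal.ofReal ((2 : ℝ) ^ (-(|(k:ℤ) - (j:ℤ)| : ℝ) * (delta * T))) := by
        intro k j
        rw [hw]
        rw [ENNReal.ofReal_rpow_of_pos (Real.rpow_pos_of_pos (by norm_num) _)]
        congr 1
        rw [← Real.rpow_mul (by norm_num)]
        congr 1
        ring
      have hS2T : (∑' i : ℤ, (2:ℝ) ^ (-|(i:ℝ)| * (delta * T))) ≤ S2 := by
        refine Summable.tsum_le_tsum (fun i => ?_) (summableS' hdT) (summableS' hdsR)
        apply Real.rpow_le_rpow_of_exponent_le one_le_two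
        have h3 := mul_le_mul_of_nonneg_left
          (mul_le_mul_of_nonneg_left hsRT hdelta.le) (abs_nonneg ((i:ℝ)))
        linarith
      have hWT : ∀ j, ∑' k, w k j ^ T ≤ ENNReal.ofReal S2 := by
        intro j
        simp_rw [hwT]
        exact (tsum_weight_le'' hdT j).trans (ENNReal.ofReal_le_ofReal hS2T)
      have hsum : ∑' k, (∑' j, w k j * a j) ^ T ≤ ENNReal.ofReal S2 * ∑' j, a j ^ T := by
        calc ∑' k, (∑' j, w k j * a j) ^ T ≤ ∑' k, ∑' j, w k j ^ T * a j ^ T :=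
              ENNReal.tsum_le_tsum hkey
        _ = ∑' j, (∑' k, w k j ^ T) * a j ^ T := by
              rw [ENNReal.tsum_comm]
              exact tsum_congr fun j => ENNReal.tsum_mul_right
        _ ≤ ∑' j, ENNReal.ofReal S2 * a j ^ T :=
              ENNReal.tsum_le_tsum fun j => mul_le_mul_left (hWT j) _
        _ = ENNReal.ofReal S2 * ∑' j, a j ^ T := ENNReal.tsum_mul_left
      calc (∑' k, (∑' j, w k j * a j) ^ T) ^ (1 / T)
          ≤ (ENNReal.ofReal S2 * ∑' j, a j ^ T) ^ (1 / T) :=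
            ENNReal.rpow_le_rpow hsum (by positivity)
      _ = ENNReal.ofReal S2 ^ (1 / T) * (∑' j, a j ^ T) ^ (1 / T) :=
            ENNReal.mul_rpow_of_nonneg _ _ (by positivity)
      _ ≤ C * (∑' j, a j ^ T) ^ (1 / T) := by
            refine mul_le_mul_left ?_ _
            rw [ENNReal.ofReal_rpow_of_pos (lt_of_lt_of_le one_pos h1S2)]
            refine le_trans (ENNReal.ofReal_le_ofReal
              (Real.rpow_le_rpow_of_exponent_le h1S2 ?_)) hS2C
            exact one_div_le_one_div_of_le hsR0 hsRT


lemma phiVE_mono (t : ℝ≥0∞) : Monotone (phiVE t) := by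
  intro s1 s2 h
  unfold phiVE
  by_cases h1 : t = ∞
  · rw [if_pos h1, if_pos h1]
    by_cases h2 : s2 ≤ 1
    · rw [if_pos (h.trans h2), if_pos h2]
    · have h3 : ¬ s1 ≤ 1 ∨ True := Or.inr trivial
      rw [if_neg h2]
      exact le_top
  · rw [if_neg h1, if_neg h1]
    exact ENNReal.rpow_le_rpow h ENNReal.toReal_nonneg

lemma modularVE_mono_ae {p f g : Rn n → ℝ≥0∞} (h : ∀ᵐ x, f x ≤ g x) :
    modularVE p f ≤ modularVE p g :=
  lintegral_mono_ae (h.mono fun x hx => phiVE_mono _ hx)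

lemma vLpNorm_mono_ae {p f g : Rn n → ℝ≥0∞} (h : ∀ᵐ x, f x ≤ g x) :
    vLpNorm p f ≤ vLpNorm p g := by
  apply sInf_le_sInf
  intro lam hl
  refine le_trans (modularVE_mono_ae ?_) hl
  exact h.mono fun x hx => ENNReal.div_le_div_right hx _

lemma vLpNorm_const_mul {p f : Rn n → ℝ≥0∞} {C : ℝ≥0∞} (hC0 : C ≠ 0) (hCt : C ≠ ∞) :
    vLpNorm p (fun x => C * f x) ≤ C * vLpNorm p f := by
  have key : ∀ lam ∈ {lam : ℝ≥0∞ | modularVE p (fun x => f x / lam) ≤ 1},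
      vLpNorm p (fun x => C * f x) ≤ C * lam := by
    intro lam hl
    refine sInf_le ?_
    show modularVE p (fun x => C * f x / (C * lam)) ≤ 1
    have e : (fun x => C * f x / (C * lam)) = fun x => f x / lam := by
      funext x; exact ENNReal.mul_div_mul_left _ _ hC0 hCt
    rwa [e]
  have h2 : vLpNorm p (fun x => C * f x) / C ≤ vLpNorm p f := by
    refine le_sInf fun lam hl => ?_
    exact (ENNReal.div_le_iff_le_mul (Or.inl hC0) (Or.inl hCt)).2
      ((key lam hl).trans_eq (mul_comm _ _))
  exact ((ENNReal.div_le_iff_le_mul (Or.inl hC0) (Or.inl hCt)).1 h2).trans_eq (mul_comm _ _)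

lemma morreyNorm_le_of_ae {p u : Rn n → ℝ≥0∞} {f g : Rn n → ℝ≥0∞} {C : ℝ≥0∞}
    (hC0 : C ≠ 0) (hCt : C ≠ ∞) (h : ∀ᵐ x, f x ≤ C * g x) :
    morreyNorm p u f ≤ C * morreyNorm p u g := by
  rw [morreyNorm]
  refine iSup_le fun x => iSup_le fun r => iSup_le fun hr => ?_
  have h1 : vLpNorm p ((Metric.ball x r).indicator f) ≤
      C * vLpNorm p ((Metric.ball x r).indicator g) := by
    refine le_trans (vLpNorm_mono_ae (p := p)
        (g := fun y => C * (Metric.ball x r).indicator g y) ?_) (vLpNorm_const_mul hC0 hCt)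
    refine h.mono fun y hy => ?_
    by_cases hyB : y ∈ Metric.ball x r
    · simpa [Set.indicator_of_mem hyB] using hy
    · simp [Set.indicator_of_notMem hyB]
  calc ENNReal.ofReal (r ^ ((n : ℝ) * ((u x)⁻¹.toReal - (p x)⁻¹.toReal))) *
        vLpNorm p ((Metric.ball x r).indicator f)
      ≤ ENNReal.ofReal (r ^ ((n : ℝ) * ((u x)⁻¹.toReal - (p x)⁻¹.toReal))) *
        (C * vLpNorm p ((Metric.ball x r).indicator g)) := mul_le_mul_right h1 _
  _ = C * (ENNReal.ofReal (r ^ ((n : ℝ) * ((u x)⁻¹.toReal - (p x)⁻¹.toReal))) *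
        vLpNorm p ((Metric.ball x r).indicator g)) := by ring
  _ ≤ C * morreyNorm p u g := by
      refine mul_le_mul_right ?_ _
      rw [morreyNorm]
      exact le_iSup_of_le x (le_iSup_of_le r (le_iSup_of_le hr le_rfl))


/-- the discrete convolution (Hardy-type) inequality in vector-valued
variable exponent Morrey spaces. -/
theorem statement6 (n : ℕ) (p q u : Rn n → ℝ≥0∞)
    (hp : IsVarExp p) (hq : IsVarExp q) (hu : IsVarExp u) (hpu : ∀ x, p x ≤ u x)
    (delta : ℝ) (hdelta : 0 < delta)
    (g : ℕ → Rn n → ℝ≥0∞) (hg : ∀ j, Measurable (g j)) :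
    morreySeqNorm p u q
        (fun k x => ∑' j : ℕ,
          ENNReal.ofReal ((2 : ℝ) ^ (-(|(k : ℤ) - (j : ℤ)| : ℝ) * delta)) * g j x) ≤
      ENNReal.ofReal
          (max (∑' j : ℤ, (2 : ℝ) ^ (-|(j : ℝ)| * delta))
            ((∑' j : ℤ, (2 : ℝ) ^ (-|(j : ℝ)| * delta *
                (essInf q (volume : Measure (Rn n))).toReal)) ^
              (1 / (essInf q (volume : Measure (Rn n))).toReal))) *
        morreySeqNorm p u q g := by
  rw [morreySeqNorm, morreySeqNorm]
  have hC1 : (1:ℝ) ≤ max (∑' j : ℤ, (2 : ℝ) ^ (-|(j : ℝ)| * delta))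
      ((∑' j : ℤ, (2 : ℝ) ^ (-|(j : ℝ)| * delta *
          (essInf q (volume : Measure (Rn n))).toReal)) ^
        (1 / (essInf q (volume : Measure (Rn n))).toReal)) :=
    le_trans (oneleS' hdelta) (le_max_left _ _)
  refine morreyNorm_le_of_ae ?_ ENNReal.ofReal_ne_top ?_
  · exact (ENNReal.ofReal_pos.mpr (lt_of_lt_of_le one_pos hC1)).ne'
  · have hae : ∀ᵐ x : Rn n, essInf q (volume : Measure (Rn n)) ≤ q x := ae_essInf_le
    refine hae.mono fun x hx => ?_
    exact lq_est delta hdelta _ hq.2.2 (q x) (hq.2.1 x) hx (fun j => g j x)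

end
end

section
/- Let n ∈ ℕ, m > 0, 1 ≤ q < ∞, x_0 ∈ ℝ^n, r > 0 and i ∈ ℕ. Let (g_ν)_{ν∈ℕ_0} be non-negative measurable functions on ℝ^n each supported in the annulus B_{2^{i+1}r}(x_0) \ B_{2^i r}(x_0), and set η_{ν,m}(x) := 2^{νn}(1 + 2^ν|x|)^{−m}. Then there is a constant c > 0 depending only on m (not on x_0, r, i, q or the g_ν) such that for every x ∈ B_r(x_0): ( ∑_{ν=0}^∞ ((η_{ν,m} ∗ g_ν)(x))^q )^{1/q} ≤ c ∫_{B_{2^{i+1}r}(x_0)} ( ∑_{ν=0}^∞ 2^{νn}(1 + 2^ν 2^i r)^{−m} g_ν(y) ) dy. -/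
open MeasureTheory ENNReal Real
open scoped FourierTransform

noncomputable section

variable {n : ℕ}

lemma fin_sum_rpow_le {q : ℝ} (hq : 1 ≤ q) (s : Finset ℕ) (a : ℕ → ℝ≥0∞) :
    ∑ ν ∈ s, a ν ^ q ≤ (∑ ν ∈ s, a ν) ^ q := by
  classical
  induction s using Finset.induction with
  | empty => simp [ENNReal.zero_rpow_of_pos (lt_of_lt_of_le one_pos hq)]
  | @insert j t hx ih =>
    rw [Finset.sum_insert hx, Finset.sum_insert hx]
    calc _ ≤ a _ ^ q + (∑ ν ∈ _, a ν) ^ q := by gcongr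
    _ ≤ _ := ENNReal.add_rpow_le_rpow_add _ _ hq

lemma tsum_rpow_le' {q : ℝ} (hq : 1 ≤ q) (a : ℕ → ℝ≥0∞) :
    (∑' ν, a ν ^ q) ^ (1/q) ≤ ∑' ν, a ν := by
  have hq0 : 0 < q := lt_of_lt_of_le one_pos hq
  have h1 : (∑' ν, a ν ^ q) ≤ (∑' ν, a ν) ^ q := by
    rw [ENNReal.tsum_eq_iSup_sum]
    refine iSup_le fun s => (fin_sum_rpow_le hq s a).trans ?_
    exact ENNReal.rpow_le_rpow (ENNReal.sum_le_tsum s) hq0.le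
  calc (∑' ν, a ν ^ q) ^ (1/q) ≤ ((∑' ν, a ν) ^ q) ^ (1/q) :=
        ENNReal.rpow_le_rpow h1 (by positivity)
  _ = ∑' ν, a ν := by rw [← ENNReal.rpow_mul, mul_one_div, div_self hq0.ne', ENNReal.rpow_one]

lemma real_aux {m A B : ℝ} (hm : 0 < m) (hA : 0 < A) (hB : 0 < B) (h : A ≤ 2 * B) :
    B ^ (-m) ≤ 2 ^ m * A ^ (-m) := by
  rw [Real.rpow_neg hA.le, Real.rpow_neg hB.le]
  have h1 : A ^ m ≤ 2 ^ m * B ^ m := by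
    rw [← Real.mul_rpow (by norm_num) hB.le]
    exact Real.rpow_le_rpow hA.le h hm.le
  have hBm : (0:ℝ) < B ^ m := Real.rpow_pos_of_pos hB m
  have h2m : (0:ℝ) < 2 ^ m := Real.rpow_pos_of_pos two_pos m
  have hAm : (0:ℝ) < A ^ m := Real.rpow_pos_of_pos hA m
  have h2 : (2 ^ m * B ^ m)⁻¹ ≤ (A ^ m)⁻¹ := inv_anti₀ hAm h1
  calc (B ^ m)⁻¹ = 2 ^ m * (2 ^ m * B ^ m)⁻¹ := by field_simp
  _ ≤ 2 ^ m * (A ^ m)⁻¹ := by nlinarith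

/-- size estimate for convolutions with functions supported in dyadic
annuli around `x₀`, evaluated on the ball `B_r(x₀)`. -/
theorem statement9 (n : ℕ) (m : ℝ) (hn : 0 < n) (hm : 0 < m) :
    ∃ c : ℝ, 0 < c ∧
      ∀ (q : ℝ), 1 ≤ q → ∀ (x0 : Rn n) (r : ℝ), 0 < r → ∀ i : ℕ, 1 ≤ i →
        ∀ g : ℕ → Rn n → ℝ≥0∞, (∀ ν, Measurable (g ν)) →
          (∀ ν, Function.support (g ν) ⊆
            Metric.ball x0 (2 ^ (i + 1) * r) \ Metric.ball x0 (2 ^ i * r)) →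
          ∀ x ∈ Metric.ball x0 r,
            (∑' ν : ℕ, (lconv (etaK ν m) (g ν) x) ^ q) ^ (1 / q) ≤
              ENNReal.ofReal c *
                ∫⁻ y in Metric.ball x0 (2 ^ (i + 1) * r),
                  ∑' ν : ℕ,
                    ENNReal.ofReal ((2 : ℝ) ^ (ν * n) * (1 + 2 ^ ν * (2 ^ i * r)) ^ (-m)) *
                      g ν y := by
  refine ⟨(2:ℝ) ^ m, Real.rpow_pos_of_pos two_pos m, ?_⟩
  intro q hq x0 r hr i hi g hgm hsupp x hx
  have hq0 : 0 < q := lt_of_lt_of_le one_pos hq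
  set S := Metric.ball x0 (2 ^ (i + 1) * r) with hS
  set C : ℝ≥0∞ := ENNReal.ofReal ((2:ℝ) ^ m) with hC
  set K : ℕ → ℝ≥0∞ := fun ν =>
    ENNReal.ofReal ((2 : ℝ) ^ (ν * n) * (1 + 2 ^ ν * (2 ^ i * r)) ^ (-m)) with hK
  have hCtop : C ≠ ∞ := ENNReal.ofReal_ne_top
  have hKtop : ∀ ν, K ν ≠ ∞ := fun ν => ENNReal.ofReal_ne_top
  -- pointwise bound on the integrand
  have hpt : ∀ ν y, etaK ν m (x - y) * g ν y ≤
      C * (S.indicator (fun y => K ν * g ν y) y) := by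
    intro ν y
    by_cases hgy : g ν y = 0
    · simp [hgy]
    · have hy := hsupp ν (by simpa [Function.mem_support] using hgy)
      have hyS : y ∈ S := hy.1
      have hynb : ¬ y ∈ Metric.ball x0 (2 ^ i * r) := hy.2
      rw [Set.indicator_of_mem hyS]
      have key : etaK ν m (x - y) ≤ C * K ν := by
        have hdist : 2 ^ i * r - r ≤ ‖x - y‖ := by
          have h1 : dist x x0 < r := by simpa [Metric.mem_ball] using hx
          have h2 : 2 ^ i * r ≤ dist y x0 := by
            simpa [Metric.mem_ball, not_lt] using hynb
          have h3 : dist y x0 ≤ dist y x + dist x x0 := dist_triangle y x x0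
          have h4 : ‖x - y‖ = dist y x := by rw [dist_comm, dist_eq_norm]
          linarith
        have hν1 : (1:ℝ) ≤ 2 ^ ν := one_le_pow₀ (by norm_num)
        have hi1 : (2:ℝ) ≤ 2 ^ i := by
          calc (2:ℝ) = 2 ^ 1 := (pow_one 2).symm
          _ ≤ 2 ^ i := pow_le_pow_right₀ (by norm_num) hi
        have hA : (0:ℝ) < 1 + 2 ^ ν * (2 ^ i * r) := by positivity
        have hB : (0:ℝ) < 1 + 2 ^ ν * ‖x - y‖ := by
          have : (0:ℝ) ≤ ‖x - y‖ := norm_nonneg _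
          positivity
        have hAB : 1 + 2 ^ ν * (2 ^ i * r) ≤ 2 * (1 + 2 ^ ν * ‖x - y‖) := by
          have e1 : (2:ℝ) ^ ν * (2 ^ i * r - r) ≤ 2 ^ ν * ‖x - y‖ :=
            mul_le_mul_of_nonneg_left hdist (by positivity)
          have e2 : 2 * ((2:ℝ) ^ ν * r) ≤ 2 ^ i * (2 ^ ν * r) :=
            mul_le_mul_of_nonneg_right hi1 (by positivity)
          nlinarith
        have hR : (1 + 2 ^ ν * ‖x - y‖) ^ (-m) ≤
            2 ^ m * (1 + 2 ^ ν * (2 ^ i * r)) ^ (-m) := real_aux hm hA hB hAB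
        have hpow : (0:ℝ) ≤ (2:ℝ) ^ (ν * n) := by positivity
        have hfin : (2:ℝ) ^ (ν * n) * (1 + 2 ^ ν * ‖x - y‖) ^ (-m) ≤
            2 ^ m * ((2:ℝ) ^ (ν * n) * (1 + 2 ^ ν * (2 ^ i * r)) ^ (-m)) := by
          calc (2:ℝ) ^ (ν * n) * (1 + 2 ^ ν * ‖x - y‖) ^ (-m)
              ≤ (2:ℝ) ^ (ν * n) * (2 ^ m * (1 + 2 ^ ν * (2 ^ i * r)) ^ (-m)) :=
                mul_le_mul_of_nonneg_left hR hpow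
          _ = _ := by ring
        calc etaK ν m (x - y) ≤
            ENNReal.ofReal (2 ^ m * ((2:ℝ) ^ (ν * n) * (1 + 2 ^ ν * (2 ^ i * r)) ^ (-m))) :=
              ENNReal.ofReal_le_ofReal hfin
        _ = C * K ν := ENNReal.ofReal_mul (by positivity)
      calc etaK ν m (x - y) * g ν y ≤ C * K ν * g ν y :=
            mul_le_mul_left key _
      _ = C * (K ν * g ν y) := mul_assoc _ _ _
  -- integral bound on each convolution
  have hconv : ∀ ν, lconv (etaK ν m) (g ν) x ≤ C * (K ν * ∫⁻ y in S, g ν y) := by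
    intro ν
    calc lconv (etaK ν m) (g ν) x
        ≤ ∫⁻ y, C * (S.indicator (fun y => K ν * g ν y) y) :=
          lintegral_mono (hpt ν)
    _ = C * ∫⁻ y, S.indicator (fun y => K ν * g ν y) y :=
          lintegral_const_mul' _ _ hCtop
    _ = C * ∫⁻ y in S, K ν * g ν y := by
          rw [lintegral_indicator measurableSet_ball]
    _ = C * (K ν * ∫⁻ y in S, g ν y) := by
          rw [lintegral_const_mul' _ _ (hKtop ν)]
  have hint : ∑' ν, (K ν * ∫⁻ y in S, g ν y) = ∫⁻ y in S, ∑' ν, K ν * g ν y := by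
    rw [lintegral_tsum (fun ν => ((hgm ν).const_mul (K ν)).aemeasurable)]
    congr 1
    ext ν
    rw [lintegral_const_mul' _ _ (hKtop ν)]
  calc (∑' ν : ℕ, (lconv (etaK ν m) (g ν) x) ^ q) ^ (1 / q)
      ≤ (∑' ν : ℕ, (C * (K ν * ∫⁻ y in S, g ν y)) ^ q) ^ (1 / q) := by
        apply ENNReal.rpow_le_rpow _ (by positivity)
        exact ENNReal.tsum_le_tsum fun ν => ENNReal.rpow_le_rpow (hconv ν) hq0.le
  _ ≤ ∑' ν : ℕ, C * (K ν * ∫⁻ y in S, g ν y) := tsum_rpow_le' hq _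
  _ = C * ∑' ν : ℕ, (K ν * ∫⁻ y in S, g ν y) := ENNReal.tsum_mul_left
  _ = C * ∫⁻ y in S, ∑' ν, K ν * g ν y := by rw [hint]


end
end

section
/- Let ε > 0 and k ∈ (1,2], and let φ_0, φ_1 ∈ S(ℝ^n) be Schwartz functions satisfying |φ_0(x)| > 0 on {|x| ≤ kε} and |φ_1(x)| > 0 on {ε ≤ |x| ≤ 2kε}. Set φ_j(x) := φ_1(2^{−j+1}x) for j ≥ 2. Then there exist Schwartz functions λ_j ∈ S(ℝ^n), j ∈ ℕ_0, such that: supp λ_0 ⊂ {x : |x| ≤ kε}; supp λ_1 ⊂ {x : ε ≤ |x| ≤ 2kε}; λ_j(x) = λ_1(2^{−j+1}x) for all x ∈ ℝ^n and j ∈ ℕ; and ∑_{j=0}^∞ λ_j(x) φ_j(x) = 1 for all x ∈ ℝ^n. -/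
open MeasureTheory ENNReal Real
open scoped FourierTransform

noncomputable section

variable {n : ℕ}

/-- Tempered distributions on `ℝ^n`. -/
abbrev TemperedDist (n : ℕ) : Type := SchwartzMap (Rn n) ℂ →L[ℂ] ℂ

lemma hasTemperateGrowth_reflectTranslate (y : Rn n) :
    Function.HasTemperateGrowth (fun z : Rn n => y - z) := by
  have hd : Differentiable ℝ (fun z : Rn n => y - z) :=
    (differentiable_const y).sub differentiable_id
  have hfd : fderiv ℝ (fun z : Rn n => y - z)
      = fun _ => -(ContinuousLinearMap.id ℝ (Rn n)) := by
    funext z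
    rw [fderiv_const_sub, fderiv_id']
  refine Function.HasTemperateGrowth.of_fderiv (k := 1) (C := ‖y‖ + 1) ?_ hd ?_
  · rw [hfd]; exact .const _
  · intro x
    calc ‖y - x‖ ≤ ‖y‖ + ‖x‖ := norm_sub_le _ _
      _ ≤ (‖y‖ + 1) * (1 + ‖x‖) ^ 1 := by
          have h1 := norm_nonneg x
          have h2 := norm_nonneg y
          nlinarith

/-- The map `z ↦ Ψ (y - z)`, as a Schwartz function. -/
def reflectTranslate (y : Rn n) (Ψ : SchwartzMap (Rn n) ℂ) : SchwartzMap (Rn n) ℂ :=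
  SchwartzMap.compCLMOfAntilipschitz (𝕜 := ℂ) (K := 1)
    (hasTemperateGrowth_reflectTranslate y)
    ((Isometry.of_dist_eq (fun z z' => dist_sub_left y z z')).antilipschitz) Ψ

@[simp] lemma reflectTranslate_apply (y : Rn n) (Ψ : SchwartzMap (Rn n) ℂ) (z : Rn n) :
    reflectTranslate y Ψ z = Ψ (y - z) := rfl

/-- The convolution `(Ψ ∗ f)(y) = f(Ψ(y - ·))` of a Schwartz function `Ψ` with a tempered
distribution `f`. -/
def distConv (Ψ : SchwartzMap (Rn n) ℂ) (f : TemperedDist n) (y : Rn n) : ℂ :=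
  f (reflectTranslate y Ψ)

/-- The Peetre maximal function at level `j`, with parameter `a`, of a function `F`
(to be applied with `F = Ψ_j ∗ f`):  `sup_y ‖F y‖ / (1 + |2^j (y - x)|^a)`. -/
def peetreMax (a : ℝ) (j : ℕ) (F : Rn n → ℂ) (x : Rn n) : ℝ≥0∞ :=
  ⨆ y : Rn n, (‖F y‖₊ : ℝ≥0∞) / ENNReal.ofReal (1 + ((2 : ℝ) ^ j * ‖y - x‖) ^ a)

/-- Admissible weight sequences from the class `W^α_{α₁,α₂}`, with constant `C` in
condition (i). -/
def AdmissibleWeights (al al1 al2 C : ℝ) (w : ℕ → Rn n → ℝ) : Prop :=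
  (∀ j, Measurable (w j)) ∧
  (∀ (j : ℕ) (x y : Rn n), 0 < w j x ∧ w j x ≤ C * w j y * (1 + 2 ^ j * ‖x - y‖) ^ al) ∧
  (∀ (j : ℕ) (x : Rn n), 2 ^ al1 * w j x ≤ w (j + 1) x ∧ w (j + 1) x ≤ 2 ^ al2 * w j x)

/-- An admissible pair `(φ̌, Φ̌)`, described through the generating functions `φ, Φ`. -/
def AdmissiblePair (phi Phi : SchwartzMap (Rn n) ℂ) : Prop :=
  (Function.support ⇑phi ⊆ {x : Rn n | 1 / 2 ≤ ‖x‖ ∧ ‖x‖ ≤ 2}) ∧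
  (Function.support ⇑Phi ⊆ {x : Rn n | ‖x‖ ≤ 2}) ∧
  ∃ c > 0, (∀ x : Rn n, 3 / 5 ≤ ‖x‖ → ‖x‖ ≤ 5 / 3 → c ≤ ‖phi x‖) ∧
    (∀ x : Rn n, ‖x‖ ≤ 5 / 3 → c ≤ ‖Phi x‖)


open scoped ContDiff in
lemma exists_schwartzMap_of_hasCompactSupport {f : Rn n → ℂ}
    (hf : ContDiff ℝ ∞ f) (h : HasCompactSupport f) :
    ∃ g : SchwartzMap (Rn n) ℂ, ⇑g = f := by
  refine ⟨⟨f, hf, fun k m => ?_⟩, rfl⟩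
  have hc : Continuous fun x : Rn n => ‖x‖ ^ k * ‖iteratedFDeriv ℝ m f x‖ :=
    (continuous_norm.pow k).mul (hf.continuous_iteratedFDeriv (by exact_mod_cast le_top)).norm
  have hcs : HasCompactSupport fun x : Rn n => ‖x‖ ^ k * ‖iteratedFDeriv ℝ m f x‖ :=
    ((h.iteratedFDeriv m).norm).mul_left
  obtain ⟨C, hC⟩ := hc.bounded_above_of_compact_support hcs
  exact ⟨C, fun x => (le_abs_self _).trans (Real.norm_eq_abs _ ▸ hC x)⟩

def smulEquiv (c : ℝ) (hc : c ≠ 0) : Rn n ≃L[ℝ] Rn n :=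
  (LinearEquiv.smulOfNeZero ℝ (Rn n) c hc).toContinuousLinearEquiv

@[simp] lemma smulEquiv_apply (c : ℝ) (hc : c ≠ 0) (x : Rn n) :
    smulEquiv c hc x = c • x := rfl

/-- construction of the resolution functions `λ_j` adapted to `φ_0, φ_1`. -/
theorem statement11 (n : ℕ) (eps k : ℝ) (heps : 0 < eps) (hk1 : 1 < k) (hk2 : k ≤ 2)
    (phi0 phi1 : SchwartzMap (Rn n) ℂ)
    (h0 : ∀ x : Rn n, ‖x‖ ≤ k * eps → 0 < ‖phi0 x‖)
    (h1 : ∀ x : Rn n, eps ≤ ‖x‖ → ‖x‖ ≤ 2 * k * eps → 0 < ‖phi1 x‖) :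
    ∃ lam : ℕ → SchwartzMap (Rn n) ℂ,
      (Function.support ⇑(lam 0) ⊆ {x : Rn n | ‖x‖ ≤ k * eps}) ∧
      (Function.support ⇑(lam 1) ⊆ {x : Rn n | eps ≤ ‖x‖ ∧ ‖x‖ ≤ 2 * k * eps}) ∧
      (∀ j : ℕ, 1 ≤ j → ∀ x : Rn n, lam j x = lam 1 ((2 : ℝ) ^ (-(j : ℝ) + 1) • x)) ∧
      (∀ x : Rn n,
        ∑' j : ℕ, lam j x *
          (if j = 0 then phi0 x else phi1 ((2 : ℝ) ^ (-(j : ℝ) + 1) • x)) = 1) := by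
  have h2pos : (0:ℝ) < 2 := by norm_num
  have hkpos : (0:ℝ) < k := lt_trans one_pos hk1
  have hke : eps < k * eps := by nlinarith
  have hkeps : (0:ℝ) < k * eps := by positivity
  set Θb : ContDiffBump (0 : Rn n) := ⟨eps, k * eps, heps, hke⟩ with hΘb
  have hone : ∀ y : Rn n, ‖y‖ ≤ eps → Θb y = 1 := fun y hy =>
    Θb.one_of_mem_closedBall (by simpa [Metric.mem_closedBall, dist_zero_right] using hy)
  have hzero : ∀ y : Rn n, k * eps ≤ ‖y‖ → Θb y = 0 := fun y hy =>
    Θb.zero_of_le_dist (by simpa [dist_zero_right] using hy)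
  have hhalf : ∀ y : Rn n, ‖(2:ℝ)⁻¹ • y‖ = ‖y‖ / 2 := by
    intro y
    rw [norm_smul, Real.norm_eq_abs, abs_of_pos (by norm_num : (0:ℝ) < 2⁻¹)]
    ring
  set num : Rn n → ℝ := fun y => Θb ((2:ℝ)⁻¹ • y) - Θb y with hnum
  have hnum_lo : ∀ y : Rn n, ‖y‖ ≤ eps → num y = 0 := by
    intro y hy
    have hA : Θb y = 1 := hone y hy
    have hB : Θb ((2:ℝ)⁻¹ • y) = 1 := hone _ (by rw [hhalf]; linarith)
    simp [hnum, hA, hB]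
  have hnum_hi : ∀ y : Rn n, 2 * k * eps ≤ ‖y‖ → num y = 0 := by
    intro y hy
    have hA : Θb y = 0 := hzero y (by nlinarith)
    have hB : Θb ((2:ℝ)⁻¹ • y) = 0 := hzero _ (by rw [hhalf]; linarith)
    simp [hnum, hA, hB]
  set f0 : Rn n → ℂ := fun y => (Θb y : ℂ) / phi0 y with hf0d
  set f1 : Rn n → ℂ := fun y => (num y : ℂ) / phi1 y with hf1d
  have hf0z : ∀ y : Rn n, k * eps ≤ ‖y‖ → f0 y = 0 := by
    intro y hy; simp [hf0d, hzero y hy]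
  have hf1z : ∀ y : Rn n, ¬(eps ≤ ‖y‖ ∧ ‖y‖ ≤ 2 * k * eps) → f1 y = 0 := by
    intro y hy
    rcases not_and_or.mp hy with hlt | hgt
    · simp [hf1d, hnum_lo y (le_of_not_ge hlt)]
    · simp [hf1d, hnum_hi y (le_of_not_ge hgt)]
  have key0 : ∀ y : Rn n, f0 y * phi0 y = (Θb y : ℂ) := by
    intro y
    by_cases hy : phi0 y = 0
    · have hn : ¬ ‖y‖ ≤ k * eps := fun hle => by simpa [hy] using h0 y hle
      simp [hf0d, hy, hzero y (le_of_not_ge hn)]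
    · exact div_mul_cancel₀ _ hy
  have key1 : ∀ y : Rn n, f1 y * phi1 y = ((num y : ℝ) : ℂ) := by
    intro y
    by_cases hy : phi1 y = 0
    · have hn : num y = 0 := by
        by_cases hlo : ‖y‖ ≤ eps
        · exact hnum_lo y hlo
        · by_cases hhi : 2 * k * eps ≤ ‖y‖
          · exact hnum_hi y hhi
          · exact absurd (h1 y (le_of_not_ge hlo) (le_of_not_ge hhi)) (by simp [hy])
      simp [hf1d, hy] at hn ⊢
      simp [hn]
    · exact div_mul_cancel₀ _ hy
  have hΘsm : ContDiff ℝ (⊤ : ℕ∞) ⇑Θb := Θb.contDiff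
  have hnumsm : ContDiff ℝ (⊤ : ℕ∞) num := by
    have h1' : ContDiff ℝ (⊤ : ℕ∞) fun y : Rn n => (2:ℝ)⁻¹ • y :=
      contDiff_id.const_smul ((2:ℝ)⁻¹)
    exact (hΘsm.comp h1').sub hΘsm
  have hsm0 : ContDiff ℝ (⊤ : ℕ∞) f0 := by
    rw [contDiff_iff_contDiffAt]
    intro y
    by_cases hy : phi0 y = 0
    · have hylt : k * eps < ‖y‖ := by
        by_contra hc
        exact absurd (h0 y (le_of_not_gt hc)) (by simp [hy])
      have hopen : IsOpen {z : Rn n | k * eps < ‖z‖} :=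
        isOpen_lt continuous_const continuous_norm
      have hev : f0 =ᶠ[nhds y] fun _ => (0:ℂ) := by
        filter_upwards [hopen.mem_nhds hylt] with z hz
        exact hf0z z (le_of_lt hz)
      exact (contDiffAt_const (c := (0:ℂ))).congr_of_eventuallyEq hev
    · rw [hf0d]
      simp only [div_eq_mul_inv]
      exact ((Complex.ofRealCLM.contDiff.comp hΘsm).contDiffAt).mul
        (ContDiffAt.comp y (((contDiffAt_inv ℂ hy).restrict_scalars (𝕜 := ℝ)))
          ((phi0.smooth ⊤).contDiffAt))
  have hsm1 : ContDiff ℝ (⊤ : ℕ∞) f1 := by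
    rw [contDiff_iff_contDiffAt]
    intro y
    by_cases hy : phi1 y = 0
    · have hcase : ‖y‖ < eps ∨ 2 * k * eps < ‖y‖ := by
        by_contra hc
        push_neg at hc
        exact absurd (h1 y hc.1 hc.2) (by simp [hy])
      rcases hcase with hlt | hgt
      · have hopen : IsOpen {z : Rn n | ‖z‖ < eps} :=
          isOpen_lt continuous_norm continuous_const
        have hev : f1 =ᶠ[nhds y] fun _ => (0:ℂ) := by
          filter_upwards [hopen.mem_nhds hlt] with z hz
          exact hf1z z (fun hcon => absurd hcon.1 (not_le.mpr hz))
        exact (contDiffAt_const (c := (0:ℂ))).congr_of_eventuallyEq hev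
      · have hopen : IsOpen {z : Rn n | 2 * k * eps < ‖z‖} :=
          isOpen_lt continuous_const continuous_norm
        have hev : f1 =ᶠ[nhds y] fun _ => (0:ℂ) := by
          filter_upwards [hopen.mem_nhds hgt] with z hz
          exact hf1z z (fun hcon => absurd hcon.2 (not_le.mpr hz))
        exact (contDiffAt_const (c := (0:ℂ))).congr_of_eventuallyEq hev
    · rw [hf1d]
      simp only [div_eq_mul_inv]
      exact ((Complex.ofRealCLM.contDiff.comp hnumsm).contDiffAt).mul
        (ContDiffAt.comp y (((contDiffAt_inv ℂ hy).restrict_scalars (𝕜 := ℝ)))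
          ((phi1.smooth ⊤).contDiffAt))
  have hcs0 : HasCompactSupport f0 := by
    apply HasCompactSupport.intro (isCompact_closedBall (0 : Rn n) (k * eps))
    intro y hy
    have : k * eps < ‖y‖ := by
      rw [Metric.mem_closedBall, dist_zero_right] at hy
      exact lt_of_not_ge hy
    exact hf0z y (le_of_lt this)
  have hcs1 : HasCompactSupport f1 := by
    apply HasCompactSupport.intro (isCompact_closedBall (0 : Rn n) (2 * k * eps))
    intro y hy
    have : 2 * k * eps < ‖y‖ := by
      rw [Metric.mem_closedBall, dist_zero_right] at hy
      exact lt_of_not_ge hy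
    exact hf1z y (fun hcon => absurd hcon.2 (not_le.mpr this))
  obtain ⟨Λ0, hΛ0⟩ := exists_schwartzMap_of_hasCompactSupport (by exact_mod_cast hsm0) hcs0
  obtain ⟨Λ1, hΛ1⟩ := exists_schwartzMap_of_hasCompactSupport (by exact_mod_cast hsm1) hcs1
  have hcpos : ∀ j : ℕ, (0:ℝ) < (2:ℝ) ^ (-(j:ℝ) + 1) :=
    fun j => Real.rpow_pos_of_pos h2pos _
  have hc1 : (2:ℝ) ^ (-((1:ℕ):ℝ) + 1) = 1 := by
    rw [show -((1:ℕ):ℝ) + 1 = 0 by push_cast; ring, Real.rpow_zero]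
  refine ⟨fun j => if j = 0 then Λ0 else
      SchwartzMap.compCLMOfContinuousLinearEquiv ℝ
        (smulEquiv ((2:ℝ) ^ (-(j:ℝ) + 1)) (hcpos j).ne') Λ1, ?_, ?_, ?_, ?_⟩
  · intro x hx
    have hx' : f0 x ≠ 0 := by
      simpa [hΛ0] using Function.mem_support.mp hx
    have hn : ¬ k * eps ≤ ‖x‖ := fun hle => hx' (hf0z x hle)
    exact le_of_not_ge hn
  · intro x hx
    have hx' : f1 x ≠ 0 := by
      have h := Function.mem_support.mp hx
      simp only [if_neg (one_ne_zero), SchwartzMap.compCLMOfContinuousLinearEquiv_apply,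
        Function.comp_apply, smulEquiv_apply, hΛ1, hc1, one_smul] at h
      exact h
    by_contra hcon
    exact hx' (hf1z x hcon)
  · intro j hj x
    have hj0 : j ≠ 0 := by omega
    simp only [if_neg hj0, if_neg (one_ne_zero), SchwartzMap.compCLMOfContinuousLinearEquiv_apply,
      Function.comp_apply, smulEquiv_apply, hc1, one_smul]
  · intro x
    have main : ∀ t : ℕ → ℂ, t 0 = ((Θb x : ℝ) : ℂ) →
        (∀ m : ℕ, t (m + 1) =
          ((Θb ((2:ℝ) ^ (-((m:ℝ) + 1)) • x) : ℝ) : ℂ) -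
            ((Θb ((2:ℝ) ^ (-(m:ℝ)) • x) : ℝ) : ℂ)) →
        ∑' j : ℕ, t j = 1 := by
      intro t ht0 htS
      obtain ⟨N, hN⟩ := pow_unbounded_of_one_lt (‖x‖ / eps) (one_lt_two (α := ℝ))
      have hθ1 : ∀ m : ℕ, N ≤ m → Θb ((2:ℝ) ^ (-(m:ℝ)) • x) = 1 := by
        intro m hm
        apply hone
        rw [norm_smul, Real.norm_eq_abs, abs_of_pos (Real.rpow_pos_of_pos h2pos _)]
        have h1' : (2:ℝ) ^ (-(m:ℝ)) ≤ (2:ℝ) ^ (-(N:ℝ)) :=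
          (Real.rpow_le_rpow_left_iff one_lt_two).mpr
            (neg_le_neg (by exact_mod_cast hm))
        have hNpos : (0:ℝ) < (2:ℝ) ^ (N:ℕ) := by positivity
        have hx' : ‖x‖ ≤ 2 ^ N * eps := le_of_lt ((div_lt_iff₀ heps).mp hN)
        have hinv : (2:ℝ) ^ (-(N:ℝ)) = ((2:ℝ) ^ (N:ℕ))⁻¹ := by
          rw [← Real.rpow_natCast 2 N, ← Real.rpow_neg (by norm_num)]
        have h2' : (2:ℝ) ^ (-(N:ℝ)) * ‖x‖ ≤ eps := by
          rw [hinv, inv_mul_le_iff₀ hNpos]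
          nlinarith
        calc (2:ℝ) ^ (-(m:ℝ)) * ‖x‖ ≤ (2:ℝ) ^ (-(N:ℝ)) * ‖x‖ :=
              mul_le_mul_of_nonneg_right h1' (norm_nonneg x)
          _ ≤ eps := h2'
      have hcast : ∀ m : ℕ, -(((m+1):ℕ):ℝ) = -((m:ℝ) + 1) := by
        intro m; push_cast; ring
      have hzero' : ∀ j : ℕ, j ∉ Finset.range (N + 1) → t j = 0 := by
        intro j hj
        match j with
        | 0 => exact absurd (Finset.mem_range.mpr (Nat.succ_pos N)) hj
        | m + 1 =>
          have hm : N ≤ m := by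
            simp only [Finset.mem_range, not_lt] at hj
            omega
          have hA : Θb ((2:ℝ) ^ (-((m:ℝ) + 1)) • x) = 1 := by
            have := hθ1 (m + 1) (le_trans hm (Nat.le_succ m))
            rwa [hcast m] at this
          rw [htS m, hA, hθ1 m hm]
          simp
      have hpartial : ∀ M : ℕ, ∑ j ∈ Finset.range (M + 1), t j =
          ((Θb ((2:ℝ) ^ (-(M:ℝ)) • x) : ℝ) : ℂ) := by
        intro M
        induction M with
        | zero => simp [ht0]
        | succ M ih =>
          rw [Finset.sum_range_succ, ih, htS M]
          rw [show -(((M+1):ℕ):ℝ) = -((M:ℝ) + 1) by push_cast; ring]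
          ring
      rw [tsum_eq_sum hzero', hpartial N]
      exact_mod_cast hθ1 N le_rfl
    refine main _ ?_ ?_
    · simp only [if_pos rfl, hΛ0, reduceIte]
      exact key0 x
    · intro m
      have hne : m + 1 ≠ 0 := Nat.succ_ne_zero m
      have he1 : (-(((m+1):ℕ):ℝ) + 1) = -(m:ℝ) := by push_cast; ring
      simp only [if_neg hne, SchwartzMap.compCLMOfContinuousLinearEquiv_apply,
        Function.comp_apply, smulEquiv_apply, hΛ1, he1]
      rw [key1]
      have hneg1 : (2:ℝ) ^ (-1:ℝ) = 2⁻¹ := by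
        rw [Real.rpow_neg (by norm_num : (0:ℝ) ≤ 2), Real.rpow_one]
      have hs : (2:ℝ)⁻¹ * (2:ℝ) ^ (-(m:ℝ)) = (2:ℝ) ^ (-((m:ℝ) + 1)) := by
        rw [show -((m:ℝ) + 1) = -(m:ℝ) + -1 by ring, Real.rpow_add h2pos, hneg1]
        ring
      have h2' : (2:ℝ)⁻¹ • ((2:ℝ) ^ (-(m:ℝ)) • x) = (2:ℝ) ^ (-((m:ℝ) + 1)) • x := by
        rw [smul_smul, hs]
      simp only [hnum]
      rw [h2']
      push_cast
      ring


end
end
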